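/- (Normal Form Theorem) Let A ⊆ ℕ be an infinite computably enumerable set and let θ be a numbering of S_A satisfying (QGN I). Then there exist a total computable q : ℕ → ℕ and a decidable computable relation T ⊆ ℕ × ℕ × ℕ such that for all i and x: θ i x is defined if and only if there is y with T(i,x,y), and in that case θ i x = Part.some (q y₀) where y₀ is the least y with T(i,x,y); equivalently, θ i x = Part.map q (Nat.rfind (λ y. T(i,x,y))). -/

import Mathlib

set_option maxHeartbeats 1000000


/-- `r : ℕ →. ℕ` is an initial-segment function for `A`: its domain is empty or
equals `{m | m < a}` for some `a ∈ A`. -/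
def IsInitSeg (A : Set ℕ) (r : ℕ →. ℕ) : Prop :=
  {x : ℕ | (r x).Dom} = (∅ : Set ℕ) ∨ ∃ a ∈ A, {x : ℕ | (r x).Dom} = {m : ℕ | m < a}

/-- `SA A` is the class of unary partial functions that are either total computable
or initial-segment functions for `A`. -/
def SA (A : Set ℕ) : Set (ℕ →. ℕ) :=
  {r | (∃ f : ℕ → ℕ, Computable f ∧ ∀ x, r x = Part.some (f x)) ∨ IsInitSeg A r}

/-- The extended graph of a unary partial function. -/
def graphE (q : ℕ →. ℕ) : Set ℕ :=
  {n | ∃ y, n = Nat.pair y 0} ∪ {n | ∃ x z, q x = Part.some z ∧ n = Nat.pair x (z + 1)}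

/-- The graph of a unary partial function. -/
def pgraph (q : ℕ →. ℕ) : Set ℕ :=
  {n | ∃ x z, q x = Part.some z ∧ n = Nat.pair x z}

/-- Condition (QGN I): the extended graph of the universal function of `θ` is
enumerated by a total computable function. -/
def QGN1 (θ : ℕ → ℕ →. ℕ) : Prop :=
  ∃ h : ℕ → ℕ, Computable h ∧
    Set.range h = {n | ∃ w, n = Nat.pair w 0} ∪
      {n | ∃ i x z, θ i x = Part.some z ∧ n = Nat.pair (Nat.pair i x) (z + 1)}

/-- Condition (QGN II). -/
def QGN2 (A : Set ℕ) (θ : ℕ → ℕ →. ℕ) : Prop :=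
  ∀ k : ℕ → ℕ → ℕ, Computable₂ k →
    ∃ v : ℕ → ℕ, Computable v ∧
      ∀ i, ∀ r ∈ SA A, Set.range (k i) = graphE r → θ (v i) = r

/-- A quasi-Gödel numbering of `SA A`. -/
def QuasiGodel (A : Set ℕ) (θ : ℕ → ℕ →. ℕ) : Prop :=
  Set.range θ = SA A ∧ QGN1 θ ∧ QGN2 A θ

/-- A set of naturals is computably enumerable. -/
def CEset (C : Set ℕ) : Prop :=
  C = ∅ ∨ ∃ g : ℕ → ℕ, Computable g ∧ C = Set.range g

/-- The standard Gödel numbering of the unary partial recursive functions. -/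
def phi (i : ℕ) : ℕ →. ℕ :=
  Nat.Partrec.Code.eval (Denumerable.ofNat Nat.Partrec.Code i)

/-- Normal Form Theorem for numberings of `SA A` satisfying (QGN I). -/
theorem normal_form (A : Set ℕ) (hAinf : A.Infinite) (hAce : CEset A)
    (θ : ℕ → ℕ →. ℕ) (hrange : Set.range θ = SA A) (h1 : QGN1 θ) :
    ∃ q : ℕ → ℕ, Computable q ∧
      ∃ T : ℕ → ℕ → ℕ → Bool,
        Computable (fun p : ℕ × ℕ × ℕ => T p.1 p.2.1 p.2.2) ∧
        (∀ i x, (θ i x).Dom ↔ ∃ y, T i x y = true) ∧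
        (∀ i x, θ i x = Part.map q (Nat.rfind (fun y => Part.some (T i x y)))) := by
  obtain ⟨h, hc, hrh⟩ := h1
  refine ⟨fun y => (h y).unpair.2 - 1, ?_, fun i x y =>
    decide ((h y).unpair.1 = Nat.pair i x ∧ (h y).unpair.2 ≠ 0), ?_, ?_⟩
  · exact (Primrec.nat_sub.comp (Primrec.snd.comp Primrec.unpair)
      (Primrec.const 1)).to_comp.comp hc
  · have hF : Primrec fun p : ℕ × ℕ × ℕ =>
        (decide (p.1.unpair.1 = Nat.pair p.2.1 p.2.2 ∧ p.1.unpair.2 ≠ 0)) := by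
      refine PrimrecPred.decide (PrimrecPred.and ?_ ?_)
      · exact Primrec.eq.comp (Primrec.fst.comp (Primrec.unpair.comp Primrec.fst))
          (Primrec₂.natPair.comp (Primrec.fst.comp Primrec.snd)
            (Primrec.snd.comp Primrec.snd))
      · exact PrimrecPred.not (Primrec.eq.comp
          (Primrec.snd.comp (Primrec.unpair.comp Primrec.fst)) (Primrec.const 0))
    have hg : Computable fun p : ℕ × ℕ × ℕ => (h p.2.2, p.1, p.2.1) :=
      (hc.comp (Computable.snd.comp Computable.snd)).pair
        (Computable.fst.pair (Computable.fst.comp Computable.snd))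
    exact hF.to_comp.comp hg
  -- key lemma
  have key : ∀ i x y, (decide ((h y).unpair.1 = Nat.pair i x ∧ (h y).unpair.2 ≠ 0)) = true ↔
      ∃ z, θ i x = Part.some z ∧ h y = Nat.pair (Nat.pair i x) (z + 1) := by
    intro i x y
    rw [decide_eq_true_iff]
    constructor
    · rintro ⟨h1', h2'⟩
      have hy : h y ∈ Set.range h := ⟨y, rfl⟩
      rw [hrh] at hy
      rcases hy with ⟨w, hw⟩ | ⟨i', x', z, hz, hw⟩
      · exfalso; apply h2'; rw [hw, Nat.unpair_pair]
      · rw [hw, Nat.unpair_pair] at h1'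
        obtain ⟨hi, hx⟩ := Nat.pair_eq_pair.mp h1'
        subst hi; subst hx
        exact ⟨z, hz, hw⟩
    · rintro ⟨z, hz, hw⟩
      rw [hw, Nat.unpair_pair]
      exact ⟨rfl, Nat.succ_ne_zero z⟩
  have dom_iff : ∀ i x, (θ i x).Dom ↔
      ∃ y, (decide ((h y).unpair.1 = Nat.pair i x ∧ (h y).unpair.2 ≠ 0)) = true := by
    intro i x
    constructor
    · intro hd
      have hz : θ i x = Part.some ((θ i x).get hd) := Part.eq_some_iff.mpr (Part.get_mem hd)
      have : Nat.pair (Nat.pair i x) ((θ i x).get hd + 1) ∈ Set.range h := by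
        rw [hrh]; exact Or.inr ⟨i, x, _, hz, rfl⟩
      obtain ⟨y, hy⟩ := this
      exact ⟨y, (key i x y).mpr ⟨_, hz, hy⟩⟩
    · rintro ⟨y, hy⟩
      obtain ⟨z, hz, -⟩ := (key i x y).mp hy
      rw [hz]; trivial
  refine ⟨dom_iff, fun i x => ?_⟩
  by_cases hd : (θ i x).Dom
  · set z := (θ i x).get hd with hzdef
    have hz : θ i x = Part.some z := Part.eq_some_iff.mpr (Part.get_mem hd)
    have hrd : (Nat.rfind fun y => Part.some
        (decide ((h y).unpair.1 = Nat.pair i x ∧ (h y).unpair.2 ≠ 0))).Dom := by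
      refine Nat.rfind_dom.mpr ?_
      obtain ⟨y, hy⟩ := (dom_iff i x).mp hd
      refine ⟨y, Part.mem_some_iff.mpr hy.symm, ?_⟩
      intro m _
      exact Part.some_dom _
    obtain ⟨y0, hy0⟩ := Part.dom_iff_mem.mp hrd
    have hy0T := Nat.rfind_spec hy0
    simp only [Part.mem_some_iff] at hy0T
    obtain ⟨z', hz', hw⟩ := (key i x y0).mp hy0T.symm
    have hzz : z' = z := by
      rw [hz] at hz'; exact (Part.some_inj.mp hz'.symm)
    rw [hz, (Part.eq_some_iff.mpr hy0), Part.map_some, hw, Nat.unpair_pair]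
    simp [hzz]
  · have hrd : ¬(Nat.rfind fun y => Part.some
        (decide ((h y).unpair.1 = Nat.pair i x ∧ (h y).unpair.2 ≠ 0))).Dom := by
      intro hrd
      obtain ⟨y0, hy0⟩ := Part.dom_iff_mem.mp hrd
      have hy0T := Nat.rfind_spec hy0
      simp only [Part.mem_some_iff] at hy0T
      exact hd ((dom_iff i x).mpr ⟨y0, hy0T.symm⟩)
    rw [Part.eq_none_iff'.mpr hd]
    symm
    rw [Part.eq_none_iff']
    exact fun hdm => hrd hdm
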